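/- Let H ∈ ℂ^{N_u×N_t}, let C ∈ ℂ^{N_u×N_u} and S ∈ ℂ^{N_u×N_u} be Hermitian positive semidefinite, let σ² > 0, and for Hermitian positive semidefinite V ∈ ℂ^{N_t×N_t} define B(V) = C + H V Hᴴ + σ² I and the rate R(V) = ln det(B(V) + S) − ln det(B(V)). Then for all Hermitian positive semidefinite V and V₀, R(V) ≥ ln det(B(V) + S) − ln det(B(V₀)) − Re(Tr(Hᴴ B(V₀)⁻¹ H (V − V₀))). -/

import Mathlib

open Matrix ComplexOrder

lemma logdet_le_trace {n : ℕ} {M : Matrix (Fin n) (Fin n) ℂ} (hM : M.PosSemidef)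
    (hd : 0 < M.det.re) : Real.log M.det.re ≤ M.trace.re - n := by
  have hH := hM.1
  have hdet : M.det = ((∏ i, hH.eigenvalues i : ℝ) : ℂ) := by
    rw [hH.det_eq_prod_eigenvalues]; push_cast; rfl
  have htr : M.trace = ((∑ i, hH.eigenvalues i : ℝ) : ℂ) := by
    rw [hH.trace_eq_sum_eigenvalues, Complex.ofReal_sum]; rfl
  have hprod : 0 < ∏ i, hH.eigenvalues i := by rw [hdet, Complex.ofReal_re] at hd; exact hd
  have hpos : ∀ i, 0 < hH.eigenvalues i := by
    intro i
    rcases (hM.eigenvalues_nonneg i).lt_or_eq with h | h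
    · exact h
    · exact absurd (Finset.prod_eq_zero (Finset.mem_univ i) h.symm) hprod.ne'
  rw [hdet, htr]
  simp only [Complex.ofReal_re]
  rw [Real.log_prod (fun i _ => (hpos i).ne')]
  calc ∑ i, Real.log (hH.eigenvalues i)
      ≤ ∑ i, (hH.eigenvalues i - 1) :=
        Finset.sum_le_sum fun i _ => Real.log_le_sub_one_of_pos (hpos i)
    _ = (∑ i, hH.eigenvalues i) - n := by
        rw [Finset.sum_sub_distrib]; simp

/-- SCA lower bound on the rate `R(V) = ln det(B(V)+S) − ln det(B(V))`
with `B(V) = C + H V Hᴴ + σ² I`: for all Hermitian positive semidefinite `V, V₀`,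
`R(V) ≥ ln det(B(V)+S) − ln det(B(V₀)) − Re Tr(Hᴴ B(V₀)⁻¹ H (V − V₀))`. -/
theorem stmt8 {Nu Nt : ℕ} (H : Matrix (Fin Nu) (Fin Nt) ℂ)
    (C S : Matrix (Fin Nu) (Fin Nu) ℂ) (hC : C.PosSemidef) (hS : S.PosSemidef)
    (σ2 : ℝ) (hσ : 0 < σ2)
    (V V0 : Matrix (Fin Nt) (Fin Nt) ℂ) (hV : V.PosSemidef) (hV0 : V0.PosSemidef) :
    Real.log (((C + H * V * Hᴴ + (σ2 : ℂ) • 1) + S).det.re)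
        - Real.log ((C + H * V * Hᴴ + (σ2 : ℂ) • 1).det.re)
      ≥ Real.log (((C + H * V * Hᴴ + (σ2 : ℂ) • 1) + S).det.re)
        - Real.log ((C + H * V0 * Hᴴ + (σ2 : ℂ) • 1).det.re)
        - ((Hᴴ * (C + H * V0 * Hᴴ + (σ2 : ℂ) • 1)⁻¹ * H * (V - V0)).trace).re := by
  set B := C + H * V * Hᴴ + (σ2 : ℂ) • 1 with hBdef
  set B0 := C + H * V0 * Hᴴ + (σ2 : ℂ) • 1 with hB0def
  have hsm : ((σ2 : ℂ) • (1 : Matrix (Fin Nu) (Fin Nu) ℂ)).PosDef := by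
    rw [smul_one_eq_diagonal]
    exact Matrix.PosDef.diagonal fun _ => Complex.zero_lt_real.mpr hσ
  have hB : B.PosDef := Matrix.PosDef.posSemidef_add (hC.add (hV.mul_mul_conjTranspose_same H)) hsm
  have hB0 : B0.PosDef := Matrix.PosDef.posSemidef_add (hC.add (hV0.mul_mul_conjTranspose_same H)) hsm
  have hB0inv : (B0⁻¹).PosDef := hB0.inv
  open scoped MatrixOrder in set L := CFC.sqrt (B0⁻¹) with hLdef
  have hLpsd : L.PosSemidef := by
    open scoped MatrixOrder in exact Matrix.nonneg_iff_posSemidef.mp (CFC.sqrt_nonneg _)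
  have hLL : L * L = B0⁻¹ := by
    open scoped MatrixOrder in
    exact CFC.sqrt_mul_sqrt_self _ (Matrix.nonneg_iff_posSemidef.mpr hB0inv.posSemidef)
  set M := L * B * L with hMdef
  have hMpsd : M.PosSemidef := by
    have := hB.posSemidef.mul_mul_conjTranspose_same L
    rwa [hLpsd.1.eq] at this
  -- determinant identities
  have hdB : B.det = ((B.det.re : ℝ) : ℂ) := by
    have := hB.det_pos
    rw [Complex.lt_def] at this
    exact Complex.ext rfl (by simpa using this.2.symm)
  have hdB0 : B0.det = ((B0.det.re : ℝ) : ℂ) := by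
    have := hB0.det_pos
    rw [Complex.lt_def] at this
    exact Complex.ext rfl (by simpa using this.2.symm)
  have hbpos : 0 < B.det.re := by
    have := hB.det_pos; rw [Complex.lt_def] at this; simpa using this.1
  have hb0pos : 0 < B0.det.re := by
    have := hB0.det_pos; rw [Complex.lt_def] at this; simpa using this.1
  have hdetM : M.det = (((B0.det.re)⁻¹ * B.det.re : ℝ) : ℂ) := by
    rw [hMdef, Matrix.det_mul, Matrix.det_mul]
    have : L.det * B.det * L.det = (L.det * L.det) * B.det := by ring
    rw [this, ← Matrix.det_mul, hLL, Matrix.det_nonsing_inv, Ring.inverse_eq_inv',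
      Complex.ofReal_mul, Complex.ofReal_inv, ← hdB, ← hdB0]
  have hMre : 0 < M.det.re := by
    rw [hdetM, Complex.ofReal_re]
    positivity
  -- trace identity
  have hB0invB0 : B0⁻¹ * B0 = 1 := Matrix.nonsing_inv_mul _ hB0.det_pos.ne'.isUnit
  have htrM : M.trace = (B0⁻¹ * B).trace := by
    rw [hMdef, Matrix.trace_mul_cycle, hLL]
  -- apply key lemma
  have key := logdet_le_trace hMpsd hMre
  rw [hdetM, Complex.ofReal_re, Real.log_mul (by positivity) hbpos.ne',
    Real.log_inv] at key
  rw [htrM] at key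
  -- relate trace
  have hsplit : B0⁻¹ * B = B0⁻¹ * B0 + B0⁻¹ * (H * (V - V0) * Hᴴ) := by
    rw [← Matrix.mul_add]
    congr 1
    rw [hBdef, hB0def, Matrix.mul_sub, Matrix.sub_mul]
    abel
  have htr2 : (B0⁻¹ * B).trace = (Nu : ℂ) + (Hᴴ * B0⁻¹ * H * (V - V0)).trace := by
    rw [hsplit, Matrix.trace_add, hB0invB0, Matrix.trace_one]
    congr 1
    · simp
    · rw [show B0⁻¹ * (H * (V - V0) * Hᴴ) = (B0⁻¹ * H) * (V - V0) * Hᴴ by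
        rw [← Matrix.mul_assoc, ← Matrix.mul_assoc], Matrix.trace_mul_cycle, ← Matrix.mul_assoc]
  rw [htr2] at key
  simp only [Complex.add_re, Complex.natCast_re] at key
  linarith
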